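/- Let k be a field of characteristic zero and let H be a k-linear subspace of k⟦t⟧ of dimension r+1. Let s_0 < s_1 < ⋯ < s_r be the elements of the set { ord(f) : f ∈ H, f ≠ 0 } (which has exactly r+1 elements). Then for every basis f_0, …, f_r of H, the Wronskian Wr(f_0,…,f_r) is nonzero of order s_0 + s_1 + ⋯ + s_r − r(r+1)/2; in particular this order is independent of the choice of basis. -/

import Mathlib

open PowerSeries Finset

lemma coeff_derivativeFun' {k : Type*} [CommRing k] (f : PowerSeries k) (n : ℕ) :
    PowerSeries.coeff n (PowerSeries.derivativeFun f) = PowerSeries.coeff (n + 1) f * (n + 1) :=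
  PowerSeries.coeff_derivative f n

lemma coeff_iter_deriv {k : Type*} [CommRing k] (c : ℕ) :
    ∀ (h : PowerSeries k) (m : ℕ),
    PowerSeries.coeff m (PowerSeries.derivativeFun^[c] h)
      = ((m + c).descFactorial c : k) * PowerSeries.coeff (m + c) h := by
  induction c with
  | zero => simp
  | succ c ih =>
    intro h m
    rw [Function.iterate_succ_apply, ih, coeff_derivativeFun']
    have h1 : (m + (c + 1)).descFactorial (c + 1) = (m + c + 1) * (m + c).descFactorial c := by
      rw [show m + (c + 1) = (m + c) + 1 by ring, Nat.succ_descFactorial_succ]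
    rw [show m + c + 1 = m + (c+1) by ring] at h1 ⊢
    rw [h1]
    push_cast
    ring

lemma coeff_prod_eq_zero {k : Type*} [CommRing k] {m : ℕ} (h : Fin m → PowerSeries k)
    (a : Fin m → ℕ) (hv : ∀ i, ∀ j < a i, PowerSeries.coeff j (h i) = 0)
    (n : ℕ) (hn : n < ∑ i, a i) :
    PowerSeries.coeff n (∏ i, h i) = 0 := by
  rw [PowerSeries.coeff_prod]
  refine Finset.sum_eq_zero fun l hl => ?_
  rw [Finset.mem_finsuppAntidiag] at hl
  by_contra hne
  have hge : ∀ i, a i ≤ l i := by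
    intro i
    by_contra hlt
    exact hne (Finset.prod_eq_zero (Finset.mem_univ i) (hv i _ (not_le.1 hlt)))
  have : ∑ i, a i ≤ ∑ i : Fin m, l i := Finset.sum_le_sum fun i _ => hge i
  rw [show (∑ i : Fin m, l i) = Finset.univ.sum l from rfl, hl.1] at this
  omega

lemma coeff_prod_eq_prod {k : Type*} [CommRing k] {m : ℕ} (h : Fin m → PowerSeries k)
    (a : Fin m → ℕ) (hv : ∀ i, ∀ j < a i, PowerSeries.coeff j (h i) = 0) :
    PowerSeries.coeff (∑ i, a i) (∏ i, h i) = ∏ i, PowerSeries.coeff (a i) (h i) := by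
  rw [PowerSeries.coeff_prod]
  rw [Finset.sum_eq_single (Finsupp.equivFunOnFinite.symm a)]
  · exact Finset.prod_congr rfl fun i _ => by simp
  · intro l hl hne
    rw [Finset.mem_finsuppAntidiag] at hl
    by_contra hne2
    have hge : ∀ i, a i ≤ l i := by
      intro i
      by_contra hlt
      exact hne2 (Finset.prod_eq_zero (Finset.mem_univ i) (hv i _ (not_le.1 hlt)))
    have heq : ∀ i ∈ Finset.univ, a i = l i := by
      refine (Finset.sum_eq_sum_iff_of_le fun i _ => hge i).1 ?_
      rw [show (∑ i : Fin m, l i) = Finset.univ.sum l from rfl, hl.1]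
    apply hne
    ext i
    simp [← heq i (Finset.mem_univ i)]
  · intro hnm
    exfalso
    apply hnm
    rw [Finset.mem_finsuppAntidiag]
    constructor
    · simp [Finsupp.sum_fintype]
    · exact Finset.subset_univ _

lemma derivFun_smul {k : Type*} [CommRing k] (a : k) (f : PowerSeries k) :
    PowerSeries.derivativeFun (a • f) = a • PowerSeries.derivativeFun f := by
  ext n
  simp [coeff_derivativeFun', PowerSeries.coeff_smul, mul_assoc]

noncomputable def derivL (k : Type*) [CommRing k] : PowerSeries k →ₗ[k] PowerSeries k where
  toFun := PowerSeries.derivativeFun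
  map_add' := PowerSeries.derivativeFun_add
  map_smul' := fun a f => derivFun_smul a f

lemma iter_deriv_sum_smul {k : Type*} [CommRing k] (m : ℕ) {n : ℕ} (c : Fin n → k)
    (p : Fin n → PowerSeries k) :
    PowerSeries.derivativeFun^[m] (∑ i, c i • p i)
      = ∑ i, c i • PowerSeries.derivativeFun^[m] (p i) := by
  have h : ∀ q : PowerSeries k, PowerSeries.derivativeFun^[m] q = ((derivL k) ^ m) q :=
    fun q => (Module.End.pow_apply (derivL k) m q).symm
  rw [h, map_sum]
  refine Finset.sum_congr rfl fun i _ => ?_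
  rw [map_smul, h]

lemma gauss_le {r : ℕ} (s : Fin (r + 1) → ℕ) (hs : StrictMono s) :
    r * (r + 1) / 2 ≤ ∑ i, s i := by
  have hT : ∑ i : Fin (r + 1), (i : ℕ) = r * (r + 1) / 2 := by
    rw [Fin.sum_univ_eq_sum_range (fun i => i) (r + 1)]
    have h2 : (∑ i ∈ Finset.range (r + 1), i) * 2 = r * (r + 1) := by
      rw [Finset.sum_range_id_mul_two, Nat.add_sub_cancel, Nat.mul_comm]
    omega
  have hile : ∀ i : Fin (r + 1), (i : ℕ) ≤ s i := by
    intro i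
    induction i using Fin.induction with
    | zero => exact Nat.zero_le _
    | succ j ih =>
      have h2 := hs j.castSucc_lt_succ
      simp only [Fin.val_succ, Fin.coe_castSucc] at *
      omega
  calc r * (r + 1) / 2 = ∑ i : Fin (r + 1), (i : ℕ) := hT.symm
    _ ≤ ∑ i, s i := Finset.sum_le_sum fun i _ => hile i

/-- The Wronskian of the power series `f_0, …, f_r`: the determinant of the
`(r+1) × (r+1)` matrix whose `(i,j)` entry is the `j`-th formal derivative of
`f_i`. -/
noncomputable def psWronskian {k : Type*} [CommRing k] (r : ℕ)
    (f : Fin (r + 1) → PowerSeries k) : PowerSeries k :=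
  (Matrix.of fun i j : Fin (r + 1) =>
    (PowerSeries.derivativeFun)^[(j : ℕ)] (f i)).det

lemma wr_echelon {k : Type*} [Field k] [CharZero k] (r : ℕ) (s : Fin (r + 1) → ℕ)
    (hs : StrictMono s) (g : Fin (r + 1) → PowerSeries k)
    (hord : ∀ i, (g i).order = (s i : ℕ∞)) :
    (psWronskian r g).order = (((∑ i, s i) - r * (r + 1) / 2 : ℕ) : ℕ∞) := by
  set T := r * (r + 1) / 2 with hTdef
  have hT : ∑ i : Fin (r + 1), (i : ℕ) = T := by
    rw [Fin.sum_univ_eq_sum_range (fun i => i) (r + 1)]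
    have h2 : (∑ i ∈ Finset.range (r + 1), i) * 2 = r * (r + 1) := by
      rw [Finset.sum_range_id_mul_two, Nat.add_sub_cancel, Nat.mul_comm]
    omega
  have hile : ∀ i : Fin (r + 1), (i : ℕ) ≤ s i := by
    intro i
    induction i using Fin.induction with
    | zero => exact Nat.zero_le _
    | succ j ih =>
      have h2 := hs j.castSucc_lt_succ
      simp only [Fin.val_succ, Fin.coe_castSucc] at *
      omega
  have hTle : T ≤ ∑ i, s i := by
    calc T = ∑ i : Fin (r + 1), (i : ℕ) := hT.symm
      _ ≤ ∑ i, s i := Finset.sum_le_sum fun i _ => hile i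
  set N := (∑ i, s i) - T with hN
  have hcz : ∀ i, ∀ m < s i, PowerSeries.coeff m (g i) = 0 := fun i m hm =>
    PowerSeries.coeff_of_lt_order m (by rw [hord i]; exact_mod_cast hm)
  have hlc : ∀ i, PowerSeries.coeff (s i) (g i) ≠ 0 := fun i =>
    (PowerSeries.order_eq_nat.1 (hord i)).1
  have hv : ∀ (σ : Equiv.Perm (Fin (r+1))) (i : Fin (r+1)), ∀ j < s (σ i) - (i:ℕ),
      PowerSeries.coeff j (PowerSeries.derivativeFun^[(i:ℕ)] (g (σ i))) = 0 := by
    intro σ i j hj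
    rw [coeff_iter_deriv, hcz (σ i) (j + i) (by omega), mul_zero]
  have hsum : ∀ σ : Equiv.Perm (Fin (r+1)),
      (∑ i, s i) ≤ (∑ i, (s (σ i) - (i:ℕ))) + T := by
    intro σ
    have h1 : ∑ i, s (σ i) = ∑ i, s i := Equiv.sum_comp σ s
    calc ∑ i, s i = ∑ i, s (σ i) := h1.symm
      _ ≤ ∑ i, ((s (σ i) - (i:ℕ)) + (i:ℕ)) :=
          Finset.sum_le_sum fun i _ => le_tsub_add
      _ = (∑ i, (s (σ i) - (i:ℕ))) + ∑ i : Fin (r+1), (i:ℕ) := Finset.sum_add_distrib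
      _ = _ := by rw [hT]
  have hdet : ∀ n, PowerSeries.coeff n (psWronskian r g)
      = ∑ σ : Equiv.Perm (Fin (r+1)), Equiv.Perm.sign σ •
          PowerSeries.coeff n (∏ i : Fin (r+1), PowerSeries.derivativeFun^[(i:ℕ)] (g (σ i))) := by
    intro n
    rw [psWronskian, Matrix.det_apply, map_sum]
    refine Finset.sum_congr rfl fun σ _ => ?_
    rw [Units.smul_def, Units.smul_def, map_zsmul]
    simp only [Matrix.of_apply]
  have hlow : ∀ n < N, PowerSeries.coeff n (psWronskian r g) = 0 := by
    intro n hn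
    rw [hdet]
    refine Finset.sum_eq_zero fun σ _ => ?_
    rw [coeff_prod_eq_zero _ (fun i => s (σ i) - (i:ℕ)) (hv σ) n
      (show n < ∑ i : Fin (r+1), (s (σ i) - (i:ℕ)) by have := hsum σ; omega), smul_zero]
  have hNval : PowerSeries.coeff N (psWronskian r g)
      = (∏ i, PowerSeries.coeff (s i) (g i)) *
        (Matrix.of fun i j : Fin (r+1) => ((s i).descFactorial (j:ℕ) : k)).det := by
    rw [hdet]
    have key : ∀ σ : Equiv.Perm (Fin (r+1)),
        PowerSeries.coeff N (∏ i : Fin (r+1), PowerSeries.derivativeFun^[(i:ℕ)] (g (σ i)))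
        = ∏ i, (((s (σ i)).descFactorial (i:ℕ) : k) *
            PowerSeries.coeff (s (σ i)) (g (σ i))) := by
      intro σ
      by_cases hcase : ∀ i : Fin (r+1), (i:ℕ) ≤ s (σ i)
      · have ha : ∀ i : Fin (r+1), (s (σ i) - (i:ℕ)) + (i:ℕ) = s (σ i) :=
          fun i => Nat.sub_add_cancel (hcase i)
        have hsumeq : ∑ i, (s (σ i) - (i:ℕ)) = N := by
          have h1 : ∑ i, s (σ i) = ∑ i, s i := Equiv.sum_comp σ s
          have h2 : ∑ i, ((s (σ i) - (i:ℕ)) + (i:ℕ)) = ∑ i, s (σ i) :=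
            Finset.sum_congr rfl fun i _ => ha i
          rw [Finset.sum_add_distrib, hT] at h2
          omega
        rw [← hsumeq, coeff_prod_eq_prod _ _ (hv σ)]
        refine Finset.prod_congr rfl fun i _ => ?_
        rw [coeff_iter_deriv, ha i]
      · push_neg at hcase
        obtain ⟨i0, hi0⟩ := hcase
        have hstrict : (∑ i, s i) < (∑ i, (s (σ i) - (i:ℕ))) + T := by
          have h1 : ∑ i, s (σ i) = ∑ i, s i := Equiv.sum_comp σ s
          have h2 : ∑ i, s (σ i) < ∑ i, ((s (σ i) - (i:ℕ)) + (i:ℕ)) := by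
            refine Finset.sum_lt_sum (fun i _ => le_tsub_add)
              ⟨i0, Finset.mem_univ i0, by omega⟩
          rw [Finset.sum_add_distrib, hT] at h2
          omega
        rw [coeff_prod_eq_zero _ (fun i => s (σ i) - (i:ℕ)) (hv σ) N
          (show N < ∑ i : Fin (r+1), (s (σ i) - (i:ℕ)) by omega)]
        symm
        refine Finset.prod_eq_zero (Finset.mem_univ i0) ?_
        rw [Nat.descFactorial_eq_zero_iff_lt.2 hi0]
        simp
    rw [Matrix.det_apply, Finset.mul_sum]
    refine Finset.sum_congr rfl fun σ _ => ?_
    rw [key σ, Finset.prod_mul_distrib,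
      Equiv.prod_comp σ (fun i => PowerSeries.coeff (s i) (g i))]
    simp only [Matrix.of_apply]
    rw [mul_smul_comm]
    congr 1
    exact mul_comm _ _
  have hdet0 : (Matrix.of fun i j : Fin (r+1) => ((s i).descFactorial (j:ℕ) : k)).det ≠ 0 := by
    have hD : (Matrix.of fun i j : Fin (r+1) => ((s i).descFactorial (j:ℕ) : k))
        = (Int.castRingHom k).mapMatrix
            (Matrix.of fun i j : Fin (r+1) => ((s i).descFactorial (j:ℕ) : ℤ)) := by
      ext i j
      simp
    have hZ : (Matrix.of fun i j : Fin (r+1) => ((s i).descFactorial (j:ℕ) : ℤ)).det ≠ 0 := by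
      have hE : (Matrix.of fun i j : Fin (r+1) => ((s i).descFactorial (j:ℕ) : ℤ))
          = Matrix.of fun i j : Fin (r+1) =>
              (descPochhammer ℤ (j:ℕ)).eval ((s i : ℤ)) := by
        ext i j
        simp [descPochhammer_eval_eq_descFactorial]
      rw [hE, ← Matrix.det_eval_matrixOfPolynomials_eq_det_vandermonde (fun i => (s i : ℤ))
        (fun j => descPochhammer ℤ (j:ℕ)) (fun j => descPochhammer_natDegree _ _)
        (fun j => monic_descPochhammer _ _), Matrix.det_vandermonde]
      refine Finset.prod_ne_zero_iff.2 fun i _ => Finset.prod_ne_zero_iff.2 fun j hj => ?_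
      have hij : s i < s j := hs (Finset.mem_Ioi.1 hj)
      intro hc
      rw [sub_eq_zero] at hc
      exact absurd (Nat.cast_injective hc) (by omega)
    rw [hD, ← RingHom.map_det]
    exact Int.cast_ne_zero.2 hZ
  rw [PowerSeries.order_eq_nat]
  refine ⟨?_, hlow⟩
  rw [hNval]
  exact mul_ne_zero (Finset.prod_ne_zero_iff.2 fun i _ => hlc i) hdet0

/-- Let `k` have characteristic zero and let `H ⊆ k⟦t⟧` be a
`k`-subspace of dimension `r + 1`, whose set of orders of nonzero elements is
enumerated as `s_0 < s_1 < ⋯ < s_r`. Then for every basis `f_0, …, f_r` of `H`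
(equivalently, any `r+1` linearly independent elements of `H`), the Wronskian
is nonzero of order `s_0 + ⋯ + s_r - r(r+1)/2` (stated additively); in
particular this order does not depend on the choice of basis. -/
theorem statement_10 {k : Type*} [Field k] [CharZero k] (r : ℕ)
    (H : Submodule k (PowerSeries k)) [FiniteDimensional k H]
    (hdim : Module.finrank k H = r + 1)
    (s : Fin (r + 1) → ℕ) (hs : StrictMono s)
    (hrange : {n : ℕ | ∃ f ∈ H, f ≠ 0 ∧ PowerSeries.order f = (n : ℕ∞)}
        = Set.range s)
    (f : Fin (r + 1) → PowerSeries k) (hfH : ∀ i, f i ∈ H)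
    (hli : LinearIndependent k f) :
    psWronskian r f ≠ 0 ∧
      (psWronskian r f).order + ((r * (r + 1) / 2 : ℕ) : ℕ∞)
        = ((∑ i, s i : ℕ) : ℕ∞) := by
  classical
  set fH : Fin (r + 1) → H := fun i => ⟨f i, hfH i⟩ with hfHdef
  have hli' : LinearIndependent k fH := LinearIndependent.of_comp H.subtype hli
  have hcard : Fintype.card (Fin (r + 1)) = Module.finrank k H := by simp [hdim]
  let bf : Module.Basis (Fin (r + 1)) k H := basisOfLinearIndependentOfCardEqFinrank hli' hcard
  have hbf : ∀ i, bf i = fH i := by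
    intro i
    rw [show bf = basisOfLinearIndependentOfCardEqFinrank hli' hcard from rfl,
      coe_basisOfLinearIndependentOfCardEqFinrank]
  have hex : ∀ i : Fin (r + 1), ∃ p, p ∈ H ∧ p ≠ 0 ∧ PowerSeries.order p = (s i : ℕ∞) := by
    intro i
    have hmem : s i ∈ {n : ℕ | ∃ f ∈ H, f ≠ 0 ∧ PowerSeries.order f = (n : ℕ∞)} := by
      rw [hrange]; exact ⟨i, rfl⟩
    obtain ⟨p, hp1, hp2, hp3⟩ := hmem
    exact ⟨p, hp1, hp2, hp3⟩
  choose g hgH hg0 hgo using hex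
  set B : Matrix (Fin (r + 1)) (Fin (r + 1)) k := fun j i => bf.repr ⟨g j, hgH j⟩ i with hBdef
  have hgf : ∀ j, g j = ∑ i, B j i • f i := by
    intro j
    have h1 := bf.sum_repr ⟨g j, hgH j⟩
    have h2 := congrArg (fun x : H => (x : PowerSeries k)) h1
    simp only [Submodule.coe_sum, SetLike.val_smul] at h2
    rw [← h2]
    refine Finset.sum_congr rfl fun i _ => ?_
    rw [hbf i]
  have hM : (Matrix.of fun j m : Fin (r + 1) => PowerSeries.derivativeFun^[(m : ℕ)] (g j))
      = (B.map (PowerSeries.C)) *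
        (Matrix.of fun i m : Fin (r + 1) => PowerSeries.derivativeFun^[(m : ℕ)] (f i)) := by
    ext j m
    rw [Matrix.mul_apply]
    simp only [Matrix.of_apply, Matrix.map_apply]
    rw [hgf j]
    have hit := iter_deriv_sum_smul (k := k) (n := r + 1) (m : ℕ) (fun i => B j i) f
    rw [hit]
    simp only [PowerSeries.smul_eq_C_mul]
  have hWg : psWronskian r g = PowerSeries.C B.det * psWronskian r f := by
    rw [psWronskian, hM, Matrix.det_mul, psWronskian]
    congr 1
    rw [← RingHom.mapMatrix_apply, ← RingHom.map_det]
  have hWgord := wr_echelon r s hs g hgo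
  have hWg0 : psWronskian r g ≠ 0 := by
    intro h
    rw [h, PowerSeries.order_zero] at hWgord
    exact ENat.coe_ne_top _ hWgord.symm
  have hd0 : B.det ≠ 0 := by
    intro h; apply hWg0; rw [hWg, h, map_zero, zero_mul]
  have hWf0 : psWronskian r f ≠ 0 := by
    intro h; apply hWg0; rw [hWg, h, mul_zero]
  have hCord : (PowerSeries.C B.det).order = 0 := by
    rw [show (0 : ℕ∞) = ((0 : ℕ) : ℕ∞) from rfl, PowerSeries.order_eq_nat]
    constructor
    · simpa using hd0
    · omega
  have hordf : (psWronskian r f).order = (((∑ i, s i) - r * (r + 1) / 2 : ℕ) : ℕ∞) := by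
    rw [hWg, PowerSeries.order_mul, hCord, zero_add] at hWgord
    exact hWgord
  refine ⟨hWf0, ?_⟩
  rw [hordf, ← Nat.cast_add]
  congr 1
  have := gauss_le s hs
  omega
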